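/- Let p and q be positive integers and let 𝓕 be a finite family of finite sets, each of size at most p. Then there is a subfamily 𝓕' of 𝓕 with |𝓕'| ≤ binom(p + q, p) that q-represents 𝓕. -/

import Mathlib

open Finset Equiv

/-- The number of permutations fixing the complement of `C` pointwise is `C.card !`. -/
lemma card_perm_fixing {n : ℕ} (C : Finset (Fin n)) :
    (univ.filter (fun g : Equiv.Perm (Fin n) => ∀ x ∉ C, g x = x)).card = (C.card).factorial := by
  classical
  have himg : (univ.filter (fun g : Equiv.Perm (Fin n) => ∀ x ∉ C, g x = x)) =
      (univ : Finset (Equiv.Perm {x // x ∈ C})).image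
        (fun f => Equiv.Perm.ofSubtype f) := by
    ext g
    simp only [mem_filter, mem_univ, true_and, mem_image]
    constructor
    · intro hg
      have hmapsto : ∀ x : Fin n, x ∈ C ↔ g x ∈ C := by
        intro x
        constructor
        · intro hx
          by_contra hgx
          have h1 := hg (g x) hgx
          have hx' : g x = x := g.injective h1
          refine hgx ?_
          rw [hx']
          exact hx
        · intro hgx
          by_contra hx
          have := hg x hx
          rw [this] at hgx; exact hx hgx
      refine ⟨g.subtypePerm (fun x => (hmapsto x).symm), ?_⟩
      ext x
      by_cases hx : x ∈ C
      · rw [Equiv.Perm.ofSubtype_apply_of_mem _ hx]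
        rfl
      · rw [Equiv.Perm.ofSubtype_apply_of_not_mem _ hx, hg x hx]
    · rintro ⟨f, rfl⟩ x hx
      exact Equiv.Perm.ofSubtype_apply_of_not_mem f hx
  rw [himg, Finset.card_image_of_injective _ ?_, Finset.card_univ, Fintype.card_perm,
    Fintype.card_coe]
  intro f f' hff'
  ext x
  have := congrArg (fun (g : Equiv.Perm (Fin n)) => g (x : Fin n)) hff'
  simp only at this
  rw [Equiv.Perm.ofSubtype_apply_of_mem f x.2, Equiv.Perm.ofSubtype_apply_of_mem f' x.2] at this
  exact congrArg Fin.val this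

lemma event_count {n : ℕ} {A B : Finset (Fin n)} (hAB : Disjoint A B) {p q : ℕ}
    (ha : A.card ≤ p) (hb : B.card ≤ q) :
    n.factorial ≤ (univ.filter (fun σ : Equiv.Perm (Fin n) =>
      ∀ x ∈ A, ∀ y ∈ B, σ x < σ y)).card * (p + q).choose p := by
  classical
  set C := A ∪ B with hC
  have hAC : A ⊆ C := subset_union_left
  have hBC : B ⊆ C := subset_union_right
  have hCcard : C.card = A.card + B.card := card_union_of_disjoint hAB
  set key : Equiv.Perm (Fin n) → (Fin n → Option (Fin n)) :=
    fun σ x => if x ∈ C then none else some (σ x) with hkey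
  set K := (univ : Finset (Equiv.Perm (Fin n))).image key with hK
  -- every full fiber has size C.card !
  have hfib : ∀ t ∈ K, (univ.filter (fun σ => key σ = t)).card = (C.card).factorial := by
    intro t ht
    obtain ⟨σ₀, -, hσ₀⟩ := mem_image.mp ht
    have heq : univ.filter (fun σ => key σ = t) =
        (univ.filter (fun g : Equiv.Perm (Fin n) => ∀ x ∉ C, g x = x)).image (fun g => σ₀ * g) := by
      ext σ
      simp only [mem_filter, mem_univ, true_and, mem_image]
      constructor
      · intro hσ
        refine ⟨σ₀⁻¹ * σ, ?_, ?_⟩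
        · intro x hx
          have h1 : key σ x = key σ₀ x := by rw [hσ, hσ₀]
          simp only [hkey, if_neg hx] at h1
          have h2 : σ x = σ₀ x := Option.some_injective _ h1
          simp [Equiv.Perm.mul_apply, h2]
        · group
      · rintro ⟨g, hg, rfl⟩
        rw [← hσ₀]
        funext x
        by_cases hx : x ∈ C
        · simp [hkey, hx]
        · simp [hkey, hx, Equiv.Perm.mul_apply, hg x hx]
    rw [heq, Finset.card_image_of_injective _ (mul_right_injective σ₀), card_perm_fixing]
  -- every fiber contains at least A.card ! * B.card ! event permutations
  have hfibE : ∀ t ∈ K, (A.card).factorial * (B.card).factorial ≤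
      (univ.filter (fun σ : Equiv.Perm (Fin n) =>
        (∀ x ∈ A, ∀ y ∈ B, σ x < σ y) ∧ key σ = t)).card := by
    intro t ht
    obtain ⟨σ₀, -, hσ₀⟩ := mem_image.mp ht
    set P := C.image σ₀ with hP
    have hPcard : P.card = C.card := Finset.card_image_of_injective _ σ₀.injective
    have hac : A.card ≤ C.card := card_le_card hAC
    set iso := P.orderIsoOfFin hPcard with hiso
    set Q : Finset (Fin n) :=
      (univ : Finset (Fin A.card)).image (fun i => (iso (Fin.castLE hac i) : Fin n)) with hQ
    have hQP : Q ⊆ P := by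
      intro v hv
      obtain ⟨i, -, rfl⟩ := mem_image.mp hv
      exact (iso (Fin.castLE hac i)).2
    have hQcard : Q.card = A.card := by
      rw [hQ, Finset.card_image_of_injective, card_univ, Fintype.card_fin]
      intro i j hij
      exact Fin.castLE_injective hac (iso.injective (Subtype.coe_injective hij))
    have hdom : ∀ u ∈ Q, ∀ v ∈ P, v ∉ Q → u < v := by
      intro u hu v hv hvQ
      obtain ⟨i, -, rfl⟩ := mem_image.mp hu
      set j := iso.symm ⟨v, hv⟩ with hj
      have hvj : v = ↑(iso j) := by rw [hj]; simp
      have hjge : A.card ≤ (j : ℕ) := by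
        by_contra hcon
        push_neg at hcon
        refine hvQ ?_
        rw [hvj]
        exact mem_image.mpr ⟨⟨(j : ℕ), hcon⟩, mem_univ _, by congr 1⟩
      rw [hvj]
      have hlt : Fin.castLE hac i < j := by
        rw [Fin.lt_def]
        exact lt_of_lt_of_le i.2 hjge
      exact Subtype.coe_lt_coe.mpr (iso.strictMono hlt)
    have hPQcard : (P \ Q).card = B.card := by
      rw [card_sdiff_of_subset hQP, hPcard, hCcard, hQcard]
      omega
    set eA : {x // x ∈ A} ≃ {x // x ∈ Q} := Finset.equivOfCardEq hQcard.symm with heA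
    set eB : {x // x ∈ B} ≃ {x // x ∈ P \ Q} := Finset.equivOfCardEq hPQcard.symm with heB
    set f : Fin n → Fin n := fun x =>
      if hx : x ∈ A then ↑(eA ⟨x, hx⟩) else if hx' : x ∈ B then ↑(eB ⟨x, hx'⟩) else σ₀ x with hf
    have hfA : ∀ (x) (hx : x ∈ A), f x = ↑(eA ⟨x, hx⟩) := by
      intro x hx; rw [hf]; simp [dif_pos hx]
    have hfB : ∀ (x) (hx : x ∈ B), f x = ↑(eB ⟨x, hx⟩) := by
      intro x hx
      have hxA : x ∉ A := disjoint_right.mp hAB hx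
      rw [hf]; simp [dif_neg hxA, dif_pos hx]
    have hfC : ∀ x ∉ C, f x = σ₀ x := by
      intro x hx
      have hxA : x ∉ A := fun h => hx (hAC h)
      have hxB : x ∉ B := fun h => hx (hBC h)
      rw [hf]; simp [dif_neg hxA, dif_neg hxB]
    have hmemP : ∀ x, f x ∈ P ↔ x ∈ C := by
      intro x
      by_cases hx : x ∈ A
      · rw [hfA x hx]
        exact ⟨fun _ => hAC hx, fun _ => hQP (eA ⟨x, hx⟩).2⟩
      · by_cases hx' : x ∈ B
        · rw [hfB x hx']
          exact ⟨fun _ => hBC hx', fun _ => (mem_sdiff.mp (eB ⟨x, hx'⟩).2).1⟩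
        · have hxC : x ∉ C := by
            rw [hC]; simp [hx, hx']
          rw [hfC x hxC]
          constructor
          · intro hmem
            obtain ⟨y, hy, hyx⟩ := mem_image.mp hmem
            rwa [← σ₀.injective hyx]
          · intro h; exact absurd h hxC
    have hinj : Function.Injective f := by
      intro x y hxy
      by_cases hx : x ∈ A
      · by_cases hy : y ∈ A
        · rw [hfA x hx, hfA y hy] at hxy
          have := eA.injective (Subtype.coe_injective hxy)
          exact congrArg Subtype.val this
        · by_cases hy' : y ∈ B
          · rw [hfA x hx, hfB y hy'] at hxy
            have h1 : (↑(eA ⟨x, hx⟩) : Fin n) ∈ Q := (eA ⟨x, hx⟩).2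
            have h2 : (↑(eB ⟨y, hy'⟩) : Fin n) ∈ P \ Q := (eB ⟨y, hy'⟩).2
            rw [hxy] at h1
            exact absurd h1 (mem_sdiff.mp h2).2
          · have hyC : y ∉ C := by rw [hC]; simp [hy, hy']
            have h1 : f x ∈ P := (hmemP x).mpr (hAC hx)
            have h2 : f y ∉ P := fun h => hyC ((hmemP y).mp h)
            rw [hxy] at h1
            exact absurd h1 h2
      · by_cases hx' : x ∈ B
        · by_cases hy : y ∈ A
          · rw [hfB x hx', hfA y hy] at hxy
            have h1 : (↑(eB ⟨x, hx'⟩) : Fin n) ∈ P \ Q := (eB ⟨x, hx'⟩).2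
            have h2 : (↑(eA ⟨y, hy⟩) : Fin n) ∈ Q := (eA ⟨y, hy⟩).2
            rw [hxy] at h1
            exact absurd h2 (mem_sdiff.mp h1).2
          · by_cases hy' : y ∈ B
            · rw [hfB x hx', hfB y hy'] at hxy
              have := eB.injective (Subtype.coe_injective hxy)
              exact congrArg Subtype.val this
            · have hyC : y ∉ C := by rw [hC]; simp [hy, hy']
              have h1 : f x ∈ P := (hmemP x).mpr (hBC hx')
              have h2 : f y ∉ P := fun h => hyC ((hmemP y).mp h)
              rw [hxy] at h1
              exact absurd h1 h2
        · have hxC : x ∉ C := by rw [hC]; simp [hx, hx']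
          by_cases hyC : y ∈ C
          · have h1 : f x ∉ P := fun h => hxC ((hmemP x).mp h)
            have h2 : f y ∈ P := (hmemP y).mpr hyC
            rw [hxy] at h1
            exact absurd h2 h1
          · rw [hfC x hxC, hfC y hyC] at hxy
            exact σ₀.injective hxy
    set σ₁ : Equiv.Perm (Fin n) := Equiv.ofBijective f (Finite.injective_iff_bijective.mp hinj)
      with hσ₁
    have hσ₁app : ∀ x, σ₁ x = f x := fun _ => rfl
    have hσ₁key : key σ₁ = t := by
      rw [← hσ₀]
      funext x
      by_cases hx : x ∈ C
      · simp [hkey, hx]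
      · simp [hkey, hx, hσ₁app x, hfC x hx]
    have hE1 : ∀ x ∈ A, ∀ y ∈ B, σ₁ x < σ₁ y := by
      intro x hx y hy
      have h1 : σ₁ x ∈ Q := by rw [hσ₁app, hfA x hx]; exact (eA ⟨x, hx⟩).2
      have h2 : σ₁ y ∈ P \ Q := by rw [hσ₁app, hfB y hy]; exact (eB ⟨y, hy⟩).2
      exact hdom _ h1 _ (mem_sdiff.mp h2).1 (mem_sdiff.mp h2).2
    -- inject Perm A × Perm B into the fiber ∩ event
    calc (A.card).factorial * (B.card).factorial
        = (univ : Finset (Equiv.Perm {x // x ∈ A} × Equiv.Perm {x // x ∈ B})).card := by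
          rw [card_univ, Fintype.card_prod, Fintype.card_perm, Fintype.card_perm,
            Fintype.card_coe, Fintype.card_coe]
      _ ≤ _ := by
          refine Finset.card_le_card_of_injOn
            (fun gp => σ₁ * Equiv.Perm.ofSubtype gp.1 * Equiv.Perm.ofSubtype gp.2) ?_ ?_
          · intro gp _hgp
            simp only [Finset.mem_coe, mem_filter, mem_univ, true_and]
            constructor
            · intro x hx y hy
              have hxB : x ∉ B := disjoint_left.mp hAB hx
              have hyA : y ∉ A := disjoint_right.mp hAB hy
              have hx2 : (↑(gp.1 ⟨x, hx⟩) : Fin n) ∈ A := (gp.1 ⟨x, hx⟩).2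
              have hy2 : (↑(gp.2 ⟨y, hy⟩) : Fin n) ∈ B := (gp.2 ⟨y, hy⟩).2
              have hy2A : (↑(gp.2 ⟨y, hy⟩) : Fin n) ∉ A := disjoint_right.mp hAB hy2
              rw [Equiv.Perm.mul_apply, Equiv.Perm.mul_apply,
                Equiv.Perm.ofSubtype_apply_of_not_mem gp.2 hxB,
                Equiv.Perm.ofSubtype_apply_of_mem gp.1 hx,
                Equiv.Perm.mul_apply, Equiv.Perm.mul_apply,
                Equiv.Perm.ofSubtype_apply_of_mem gp.2 hy,
                Equiv.Perm.ofSubtype_apply_of_not_mem gp.1 hy2A]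
              exact hE1 _ hx2 _ hy2
            · rw [← hσ₁key]
              funext x
              by_cases hx : x ∈ C
              · simp [hkey, hx]
              · have hxA : x ∉ A := fun h => hx (hAC h)
                have hxB : x ∉ B := fun h => hx (hBC h)
                simp only [hkey, if_neg hx, Option.some_inj, Equiv.Perm.mul_apply,
                  Equiv.Perm.ofSubtype_apply_of_not_mem gp.2 hxB,
                  Equiv.Perm.ofSubtype_apply_of_not_mem gp.1 hxA]
          · intro gp _h1 gp' _h2 h
            simp only at h
            have h2 : gp.2 = gp'.2 := by
              ext y
              have hy := y.2
              have := congrArg (fun σ : Equiv.Perm (Fin n) => σ (y : Fin n)) h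
              simp only [Equiv.Perm.mul_apply] at this
              rw [Equiv.Perm.ofSubtype_apply_of_mem gp.2 hy,
                Equiv.Perm.ofSubtype_apply_of_mem gp'.2 hy,
                Equiv.Perm.ofSubtype_apply_of_not_mem gp.1
                  (disjoint_right.mp hAB (gp.2 ⟨y, hy⟩).2),
                Equiv.Perm.ofSubtype_apply_of_not_mem gp'.1
                  (disjoint_right.mp hAB (gp'.2 ⟨y, hy⟩).2)] at this
              have h3 := σ₁.injective this
              exact congrArg Fin.val h3
            have h1 : gp.1 = gp'.1 := by
              ext x
              have hx := x.2
              have hxB : (x : Fin n) ∉ B := disjoint_left.mp hAB hx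
              have := congrArg (fun σ : Equiv.Perm (Fin n) => σ (x : Fin n)) h
              simp only [Equiv.Perm.mul_apply] at this
              rw [Equiv.Perm.ofSubtype_apply_of_not_mem gp.2 hxB,
                Equiv.Perm.ofSubtype_apply_of_not_mem gp'.2 hxB,
                Equiv.Perm.ofSubtype_apply_of_mem gp.1 hx,
                Equiv.Perm.ofSubtype_apply_of_mem gp'.1 hx] at this
              have h3 := σ₁.injective this
              exact congrArg Fin.val h3
            exact Prod.ext h1 h2
  -- assemble
  set E := univ.filter (fun σ : Equiv.Perm (Fin n) => ∀ x ∈ A, ∀ y ∈ B, σ x < σ y) with hE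
  have h1 : (univ : Finset (Equiv.Perm (Fin n))).card =
      ∑ t ∈ K, (univ.filter (fun σ => key σ = t)).card :=
    card_eq_sum_card_fiberwise (fun σ _ => mem_image_of_mem key (mem_univ σ))
  have h2 : E.card = ∑ t ∈ K, (univ.filter (fun σ : Equiv.Perm (Fin n) =>
      (∀ x ∈ A, ∀ y ∈ B, σ x < σ y) ∧ key σ = t)).card := by
    rw [card_eq_sum_card_fiberwise (f := key) (t := K)
      (fun σ _ => mem_image_of_mem key (mem_univ σ))]
    refine Finset.sum_congr rfl fun t _ => ?_
    rw [hE, filter_filter]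
  have hn : n.factorial = K.card * (C.card).factorial := by
    calc n.factorial = (univ : Finset (Equiv.Perm (Fin n))).card := by
          rw [card_univ, Fintype.card_perm, Fintype.card_fin]
      _ = ∑ t ∈ K, (univ.filter (fun σ => key σ = t)).card := h1
      _ = ∑ t ∈ K, (C.card).factorial := Finset.sum_congr rfl hfib
      _ = K.card * (C.card).factorial := by rw [sum_const, smul_eq_mul]
  have hEge : K.card * ((A.card).factorial * (B.card).factorial) ≤ E.card := by
    rw [h2]
    calc K.card * ((A.card).factorial * (B.card).factorial)
        = ∑ _t ∈ K, (A.card).factorial * (B.card).factorial := by rw [sum_const, smul_eq_mul]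
      _ ≤ _ := Finset.sum_le_sum hfibE
  have hchoose : (A.card + B.card).choose B.card ≤ (p + q).choose p := by
    calc (A.card + B.card).choose B.card
        ≤ (p + B.card).choose B.card := Nat.choose_le_choose _ (Nat.add_le_add_right ha _)
      _ = (p + B.card).choose p := Nat.choose_symm_add.symm
      _ ≤ (p + q).choose p := Nat.choose_le_choose _ (Nat.add_le_add_left hb _)
  calc n.factorial = K.card * (C.card).factorial := hn
    _ = K.card * ((A.card + B.card).choose B.card *
        (A.card).factorial * (B.card).factorial) := by
          rw [hCcard, Nat.add_choose_mul_factorial_mul_factorial]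
    _ ≤ K.card * ((p + q).choose p * (A.card).factorial * (B.card).factorial) := by
          exact Nat.mul_le_mul_left _
            (Nat.mul_le_mul_right _ (Nat.mul_le_mul_right _ hchoose))
    _ = (K.card * ((A.card).factorial * (B.card).factorial)) * (p + q).choose p := by ring
    _ ≤ E.card * (p + q).choose p := Nat.mul_le_mul_right _ hEge

lemma bollobas_bound {n p q : ℕ} (𝒜 : Finset (Finset (Fin n) × Finset (Fin n)))
    (hA : ∀ z ∈ 𝒜, z.1.card ≤ p) (hB : ∀ z ∈ 𝒜, z.2.card ≤ q)
    (hd : ∀ z ∈ 𝒜, Disjoint z.1 z.2)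
    (hcross : ∀ z ∈ 𝒜, ∀ w ∈ 𝒜, z ≠ w → (z.1 ∩ w.2).Nonempty) :
    𝒜.card ≤ (p + q).choose p := by
  classical
  set E : Finset (Fin n) × Finset (Fin n) → Finset (Equiv.Perm (Fin n)) :=
    fun z => univ.filter (fun σ => ∀ x ∈ z.1, ∀ y ∈ z.2, σ x < σ y) with hE
  have hdisj : ∀ z ∈ 𝒜, ∀ w ∈ 𝒜, z ≠ w → Disjoint (E z) (E w) := by
    intro z hz w hw hzw
    rw [Finset.disjoint_left]
    intro σ hσz hσw
    obtain ⟨x, hx⟩ := hcross z hz w hw hzw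
    obtain ⟨y, hy⟩ := hcross w hw z hz (Ne.symm hzw)
    rw [mem_inter] at hx hy
    have h1 : σ x < σ y := (mem_filter.mp hσz).2 x hx.1 y hy.2
    have h2 : σ y < σ x := (mem_filter.mp hσw).2 y hy.1 x hx.2
    exact absurd h1 (not_lt.mpr h2.le)
  have hsum : ∑ z ∈ 𝒜, (E z).card ≤ n.factorial := by
    rw [← Finset.card_biUnion hdisj]
    calc (𝒜.biUnion E).card ≤ (univ : Finset (Equiv.Perm (Fin n))).card :=
          card_le_card (subset_univ _)
      _ = n.factorial := by rw [card_univ, Fintype.card_perm, Fintype.card_fin]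
  have hlow : ∀ z ∈ 𝒜, n.factorial ≤ (E z).card * (p + q).choose p := by
    intro z hz
    exact event_count (hd z hz) (hA z hz) (hB z hz)
  have hmain : 𝒜.card * n.factorial ≤ n.factorial * (p + q).choose p := by
    calc 𝒜.card * n.factorial = ∑ _z ∈ 𝒜, n.factorial := by rw [sum_const, smul_eq_mul]
      _ ≤ ∑ z ∈ 𝒜, (E z).card * (p + q).choose p := Finset.sum_le_sum hlow
      _ = (∑ z ∈ 𝒜, (E z).card) * (p + q).choose p := by rw [sum_mul]
      _ ≤ n.factorial * (p + q).choose p := Nat.mul_le_mul_right _ hsum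
  have hfac : 0 < n.factorial := Nat.factorial_pos n
  calc 𝒜.card = 𝒜.card * n.factorial / n.factorial := by rw [Nat.mul_div_cancel _ hfac]
    _ ≤ n.factorial * (p + q).choose p / n.factorial := Nat.div_le_div_right hmain
    _ = (p + q).choose p := by rw [Nat.mul_div_cancel_left _ hfac]

lemma card_attach_filter_mem {α : Type} [DecidableEq α] (U T : Finset α) (hT : T ⊆ U) :
    (Finset.filter (fun u => u.1 ∈ T) U.attach).card = T.card := by
  refine Finset.card_bij (fun u _ => u.1) ?_ ?_ ?_
  · intro u hu
    exact (mem_filter.mp hu).2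
  · intro u hu v hv huv
    exact Subtype.ext huv
  · intro a ha
    exact ⟨⟨a, hT ha⟩, mem_filter.mpr ⟨mem_attach _ _, ha⟩, rfl⟩

/-- A subfamily `F'` of a family `F` of finite sets `q`-represents `F` if for every set
`S` of size at most `q` such that some member of `F` is disjoint from `S`, there is a
member of `F'` that is also disjoint from `S`. -/
def QRepresents {α : Type} (q : ℕ) (F' F : Finset (Finset α)) : Prop :=
  ∀ S : Finset α, S.card ≤ q → (∃ X ∈ F, Disjoint X S) → ∃ X ∈ F', Disjoint X S

theorem exists_small_representative_subfamily {α : Type} (p q : ℕ)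
    (hp : 0 < p) (hq : 0 < q) (F : Finset (Finset α)) (hF : ∀ X ∈ F, X.card ≤ p) :
    ∃ F' ⊆ F, F'.card ≤ (p + q).choose p ∧ QRepresents q F' F := by
  classical
  set 𝒮 := F.powerset.filter (fun G => QRepresents q G F) with h𝒮
  have hF𝒮 : F ∈ 𝒮 := by
    rw [h𝒮, mem_filter, mem_powerset]
    exact ⟨Subset.rfl, fun S _ h => h⟩
  obtain ⟨G, hG𝒮, hGmin⟩ := Finset.exists_min_image 𝒮 Finset.card ⟨F, hF𝒮⟩
  rw [h𝒮, mem_filter, mem_powerset] at hG𝒮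
  obtain ⟨hGF, hGrep⟩ := hG𝒮
  refine ⟨G, hGF, ?_, hGrep⟩
  -- for each X in G there is a witness set S
  have key : ∀ X ∈ G, ∃ S : Finset α, S.card ≤ q ∧ Disjoint X S ∧
      ∀ Y ∈ G, Y ≠ X → (Y ∩ S).Nonempty := by
    intro X hX
    have hne : ¬ QRepresents q (G.erase X) F := by
      intro hrep
      have hmem : G.erase X ∈ 𝒮 := by
        rw [h𝒮, mem_filter, mem_powerset]
        exact ⟨(erase_subset _ _).trans hGF, hrep⟩
      have hle := hGmin _ hmem
      have hlt : (G.erase X).card < G.card := card_erase_lt_of_mem hX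
      omega
    unfold QRepresents at hne
    push_neg at hne
    obtain ⟨S, hSq, hSex, hSnone⟩ := hne
    obtain ⟨Y, hYG, hYdisj⟩ := hGrep S hSq hSex
    have hYX : Y = X := by
      by_contra hcon
      exact hSnone Y (mem_erase.mpr ⟨hcon, hYG⟩) hYdisj
    refine ⟨S, hSq, hYX ▸ hYdisj, fun Z hZ hZX => ?_⟩
    exact not_disjoint_iff_nonempty_inter.mp (hSnone Z (mem_erase.mpr ⟨hZX, hZ⟩))
  choose! S hS1 hS2 hS3 using key
  set U : Finset α := G.biUnion (fun X => X ∪ S X) with hU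
  have hXU : ∀ X ∈ G, X ⊆ U := fun X hX =>
    subset_union_left.trans (subset_biUnion_of_mem (fun Y => Y ∪ S Y) hX)
  have hSU : ∀ X ∈ G, S X ⊆ U := fun X hX =>
    subset_union_right.trans (subset_biUnion_of_mem (fun Y => Y ∪ S Y) hX)
  set n := U.card with hn
  set e := U.equivFin with he
  set L : Finset α → Finset (Fin n) :=
    fun T => (Finset.filter (fun u => u.1 ∈ T) U.attach).image (⇑e) with hL
  have hmemL : ∀ (T : Finset α) (v : Fin n), v ∈ L T ↔ ((e.symm v : α) ∈ T) := by
    intro T v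
    rw [hL]
    simp only [mem_image, mem_filter, mem_attach, true_and]
    constructor
    · rintro ⟨u, hu, rfl⟩
      rwa [Equiv.symm_apply_apply]
    · intro h
      exact ⟨e.symm v, h, e.apply_symm_apply v⟩
  have hcardL : ∀ T : Finset α, T ⊆ U → (L T).card = T.card := by
    intro T hT
    rw [hL]
    rw [Finset.card_image_of_injective _ e.injective, card_attach_filter_mem U T hT]
  have hLdisj : ∀ X ∈ G, Disjoint (L X) (L (S X)) := by
    intro X hX
    rw [Finset.disjoint_left]
    intro v hv1 hv2
    rw [hmemL] at hv1 hv2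
    exact (Finset.disjoint_left.mp (hS2 X hX)) hv1 hv2
  have hLinter : ∀ X ∈ G, ∀ Y ∈ G, X ≠ Y → ((L X) ∩ (L (S Y))).Nonempty := by
    intro X hX Y hY hXY
    obtain ⟨x, hx⟩ := hS3 Y hY X hX hXY
    rw [mem_inter] at hx
    have hxU : x ∈ U := hXU X hX hx.1
    refine ⟨e ⟨x, hxU⟩, mem_inter.mpr ⟨?_, ?_⟩⟩
    · rw [hmemL, Equiv.symm_apply_apply]; exact hx.1
    · rw [hmemL, Equiv.symm_apply_apply]; exact hx.2
  have hLinj : ∀ X ∈ G, ∀ Y ∈ G, L X = L Y → X = Y := by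
    intro X hX Y hY hXY
    ext a
    constructor
    · intro ha
      have haU : a ∈ U := hXU X hX ha
      have : e ⟨a, haU⟩ ∈ L X := by rw [hmemL, Equiv.symm_apply_apply]; exact ha
      rw [hXY, hmemL, Equiv.symm_apply_apply] at this
      exact this
    · intro ha
      have haU : a ∈ U := hXU Y hY ha
      have : e ⟨a, haU⟩ ∈ L Y := by rw [hmemL, Equiv.symm_apply_apply]; exact ha
      rw [← hXY, hmemL, Equiv.symm_apply_apply] at this
      exact this
  set 𝒜 : Finset (Finset (Fin n) × Finset (Fin n)) :=
    G.image (fun X => (L X, L (S X))) with h𝒜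
  have hcard𝒜 : 𝒜.card = G.card := by
    rw [h𝒜]
    refine Finset.card_image_of_injOn fun X hX Y hY hXY => ?_
    exact hLinj X hX Y hY (congrArg Prod.fst hXY)
  rw [← hcard𝒜]
  refine bollobas_bound 𝒜 ?_ ?_ ?_ ?_
  · rintro z hz
    obtain ⟨X, hX, rfl⟩ := mem_image.mp hz
    rw [hcardL X (hXU X hX)]
    exact hF X (hGF hX)
  · rintro z hz
    obtain ⟨X, hX, rfl⟩ := mem_image.mp hz
    rw [hcardL _ (hSU X hX)]
    exact hS1 X hX
  · rintro z hz
    obtain ⟨X, hX, rfl⟩ := mem_image.mp hz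
    exact hLdisj X hX
  · rintro z hz w hw hzw
    obtain ⟨X, hX, rfl⟩ := mem_image.mp hz
    obtain ⟨Y, hY, rfl⟩ := mem_image.mp hw
    have hXY : X ≠ Y := fun h => hzw (by rw [h])
    exact hLinter X hX Y hY hXY
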